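/- arXiv:1807.05414 — 2 statements merged into one kernel-verified Lean document; each statement's English description precedes it below -/
import Mathlib

section
/- Let Ω = {0,1}^ℤ and let ν be a probability measure on Ω that is invariant under the map η ↦ η^{x,x+1} swapping coordinates x and x+1. Let f : Ω → [0,∞) be ν-integrable, g a bounded measurable function, and h a bounded measurable function satisfying h(η^{x,x+1}) = h(η) for all η. Then for every β > 0, ∫ f·h·(g∘σ − g) dν ≤ β ∫ (√(f∘σ) − √f)² dν + (1/β) ∫ (g² + (g∘σ)²)·f·h² dν, where σ(η) = η^{x,x+1}. -/
open MeasureTheory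

/-- The configuration obtained from `η` by exchanging the values at sites `x` and `x+1`. -/
def swapConf (x : ℤ) (η : ℤ → Bool) : ℤ → Bool :=
  fun y => if y = x then η (x + 1) else if y = x + 1 then η x else η y

lemma swap_invol (x : ℤ) (η : ℤ → Bool) : swapConf x (swapConf x η) = η := by
  funext y
  simp only [swapConf]
  split_ifs with h1 h2 <;> simp_all

lemma algebra_key (β sf sfs hv gv gsv : ℝ) (hβ : 0 < β) (hsf0 : 0 ≤ sf) (hsfs0 : 0 ≤ sfs) :
    (1/2) * ((sf ^ 2 - sfs ^ 2) * hv * (gsv - gv))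
      ≤ β * (sfs - sf) ^ 2 + (1/(4*β)) * ((sf ^ 2 + sfs ^ 2) * (gv ^ 2 + gsv ^ 2) * hv ^ 2) := by
  set u := sf - sfs with hu
  set w := (sf + sfs) * hv * (gsv - gv) / 2 with hw
  have h4 : (0:ℝ) < 4 * β := by linarith
  have amgm : u * w ≤ β * u ^ 2 + w ^ 2 / (4 * β) := by
    have step : u * w - β * u ^ 2 ≤ w ^ 2 / (4 * β) := by
      rw [le_div_iff₀ h4]
      nlinarith [sq_nonneg (2 * β * u - w)]
    linarith
  have hlhs : (1/2) * ((sf ^ 2 - sfs ^ 2) * hv * (gsv - gv)) = u * w := by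
    rw [hu, hw]; ring
  have hw2 : w ^ 2 ≤ (sf ^ 2 + sfs ^ 2) * (gv ^ 2 + gsv ^ 2) * hv ^ 2 := by
    have A1 : (sf + sfs) ^ 2 ≤ 2 * (sf ^ 2 + sfs ^ 2) := by nlinarith [sq_nonneg (sf - sfs)]
    have A2 : (gsv - gv) ^ 2 ≤ 2 * (gv ^ 2 + gsv ^ 2) := by nlinarith [sq_nonneg (gsv + gv)]
    have A3 : (sf + sfs) ^ 2 * (gsv - gv) ^ 2
        ≤ (2 * (sf ^ 2 + sfs ^ 2)) * (2 * (gv ^ 2 + gsv ^ 2)) :=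
      mul_le_mul A1 A2 (sq_nonneg _) (by positivity)
    have hwval : w ^ 2 = (sf + sfs) ^ 2 * (gsv - gv) ^ 2 * hv ^ 2 / 4 := by rw [hw]; ring
    rw [hwval]
    nlinarith [mul_le_mul_of_nonneg_right A3 (sq_nonneg hv)]
  have hdiv : w ^ 2 / (4 * β) ≤ (sf ^ 2 + sfs ^ 2) * (gv ^ 2 + gsv ^ 2) * hv ^ 2 / (4 * β) := by
    gcongr
  have hueq : u ^ 2 = (sfs - sf) ^ 2 := by rw [hu]; ring
  have hrw : (1/(4*β)) * ((sf ^ 2 + sfs ^ 2) * (gv ^ 2 + gsv ^ 2) * hv ^ 2)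
      = (sf ^ 2 + sfs ^ 2) * (gv ^ 2 + gsv ^ 2) * hv ^ 2 / (4 * β) := by ring
  rw [hlhs, hrw, ← hueq]
  linarith

/-- Integration-by-parts estimate for the exclusion Dirichlet form. -/
theorem stmt_4 (x : ℤ) (ν : Measure (ℤ → Bool)) [IsProbabilityMeasure ν]
    (hσ : MeasurePreserving (swapConf x) ν ν)
    (f g h : (ℤ → Bool) → ℝ)
    (hf : Measurable f) (hg : Measurable g) (hh : Measurable h)
    (hf0 : ∀ η, 0 ≤ f η)
    (Mf Mg Mh : ℝ)
    (hfb : ∀ η, f η ≤ Mf) (hgb : ∀ η, |g η| ≤ Mg) (hhb : ∀ η, |h η| ≤ Mh)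
    (hinv : ∀ η, h (swapConf x η) = h η)
    (β : ℝ) (hβ : 0 < β) :
    ∫ η, f η * h η * (g (swapConf x η) - g η) ∂ν ≤
      β * ∫ η, (Real.sqrt (f (swapConf x η)) - Real.sqrt (f η)) ^ 2 ∂ν +
        (1 / β) * ∫ η, (g η ^ 2 + g (swapConf x η) ^ 2) * f η * h η ^ 2 ∂ν := by
  have hm : Measurable (swapConf x) := hσ.measurable
  let e : (ℤ → Bool) ≃ᵐ (ℤ → Bool) :=
    { toFun := swapConf x, invFun := swapConf x,
      left_inv := swap_invol x, right_inv := swap_invol x,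
      measurable_toFun := hm, measurable_invFun := hm }
  have cov : ∀ F : (ℤ → Bool) → ℝ, ∫ η, F (swapConf x η) ∂ν = ∫ η, F η ∂ν :=
    fun F => hσ.integral_comp e.measurableEmbedding F
  set η₀ : ℤ → Bool := fun _ => false with hη₀
  have hMf0 : 0 ≤ Mf := le_trans (hf0 η₀) (hfb η₀)
  have hMg0 : 0 ≤ Mg := le_trans (abs_nonneg _) (hgb η₀)
  have hMh0 : 0 ≤ Mh := le_trans (abs_nonneg _) (hhb η₀)
  have integ : ∀ (F : (ℤ → Bool) → ℝ) (C : ℝ), Measurable F → (∀ η, |F η| ≤ C) →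
      Integrable F ν := fun F C hFm hFb =>
    (integrable_const C).mono' hFm.aestronglyMeasurable
      (ae_of_all _ (fun η => by simpa using hFb η))
  have habs : ∀ (a b A B : ℝ), |a| ≤ A → |b| ≤ B → |a - b| ≤ A + B := by
    intro a b A B ha hb
    have h1 := abs_le.mp ha; have h2 := abs_le.mp hb
    exact abs_le.mpr ⟨by linarith [h1.1, h2.2], by linarith [h1.2, h2.1]⟩
  have hsq : ∀ (a M : ℝ), |a| ≤ M → a ^ 2 ≤ M ^ 2 := fun a M hM => by
    nlinarith [abs_nonneg a, sq_abs a]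
  have hfs : Measurable fun η => f (swapConf x η) := hf.comp hm
  have hgs : Measurable fun η => g (swapConf x η) := hg.comp hm
  have hfba : ∀ η, |f η| ≤ Mf := fun η => by rw [abs_of_nonneg (hf0 η)]; exact hfb η
  have i1 : Integrable (fun η => f η * h η * (g (swapConf x η) - g η)) ν := by
    refine integ _ (Mf * Mh * (Mg + Mg)) ((hf.mul hh).mul (hgs.sub hg)) (fun η => ?_)
    rw [abs_mul, abs_mul]
    gcongr
    · exact hfba η
    · exact hhb η
    · exact habs _ _ _ _ (hgb _) (hgb η)
  have i1'' : Integrable (fun η => f (swapConf x η) * h η * (g (swapConf x η) - g η)) ν := by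
    refine integ _ (Mf * Mh * (Mg + Mg)) ((hfs.mul hh).mul (hgs.sub hg)) (fun η => ?_)
    rw [abs_mul, abs_mul]
    gcongr
    · exact hfba _
    · exact hhb η
    · exact habs _ _ _ _ (hgb _) (hgb η)
  have iA : Integrable (fun η => (Real.sqrt (f (swapConf x η)) - Real.sqrt (f η)) ^ 2) ν := by
    refine integ _ ((Real.sqrt Mf + Real.sqrt Mf) ^ 2)
      ((hfs.sqrt.sub hf.sqrt).pow_const 2) (fun η => ?_)
    rw [abs_of_nonneg (sq_nonneg _)]
    refine hsq _ _ ?_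
    exact habs _ _ _ _
      (by rw [abs_of_nonneg (Real.sqrt_nonneg _)]; exact Real.sqrt_le_sqrt (hfb _))
      (by rw [abs_of_nonneg (Real.sqrt_nonneg _)]; exact Real.sqrt_le_sqrt (hfb η))
  have prodbound : ∀ η (fv : ℝ), 0 ≤ fv → fv ≤ Mf →
      (g η ^ 2 + g (swapConf x η) ^ 2) * fv * h η ^ 2 ≤ (Mg ^ 2 + Mg ^ 2) * Mf * Mh ^ 2 := by
    intro η fv hfv0 hfvM
    refine mul_le_mul (mul_le_mul (add_le_add (hsq _ _ (hgb η)) (hsq _ _ (hgb _)))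
      hfvM hfv0 (by positivity)) (hsq _ _ (hhb η)) (sq_nonneg _)
      (mul_nonneg (by positivity) hMf0)
  have iC1 : Integrable (fun η => (g η ^ 2 + g (swapConf x η) ^ 2) * f η * h η ^ 2) ν := by
    refine integ _ ((Mg ^ 2 + Mg ^ 2) * Mf * Mh ^ 2)
      (((hg.pow_const 2).add (hgs.pow_const 2)).mul hf |>.mul (hh.pow_const 2)) (fun η => ?_)
    rw [abs_of_nonneg (mul_nonneg (mul_nonneg (by positivity) (hf0 η)) (sq_nonneg _))]
    exact prodbound η _ (hf0 η) (hfb η)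
  have iC2 : Integrable (fun η =>
      (g η ^ 2 + g (swapConf x η) ^ 2) * f (swapConf x η) * h η ^ 2) ν := by
    refine integ _ ((Mg ^ 2 + Mg ^ 2) * Mf * Mh ^ 2)
      (((hg.pow_const 2).add (hgs.pow_const 2)).mul hfs |>.mul (hh.pow_const 2)) (fun η => ?_)
    rw [abs_of_nonneg (mul_nonneg (mul_nonneg (by positivity) (hf0 _)) (sq_nonneg _))]
    exact prodbound η _ (hf0 _) (hfb _)
  have iD : Integrable (fun η =>
      (f η + f (swapConf x η)) * (g η ^ 2 + g (swapConf x η) ^ 2) * h η ^ 2) ν := by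
    have hfe : (fun η => (f η + f (swapConf x η)) * (g η ^ 2 + g (swapConf x η) ^ 2) * h η ^ 2)
        = fun η => (g η ^ 2 + g (swapConf x η) ^ 2) * f η * h η ^ 2
          + (g η ^ 2 + g (swapConf x η) ^ 2) * f (swapConf x η) * h η ^ 2 := by
      funext η; ring
    rw [hfe]
    exact iC1.add iC2
  -- change of variables identities
  have e1 : ∫ η, f η * h η * (g (swapConf x η) - g η) ∂ν
      = ∫ η, f (swapConf x η) * h η * (g η - g (swapConf x η)) ∂ν := by
    conv_lhs => rw [← cov (fun η => f η * h η * (g (swapConf x η) - g η))]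
    refine integral_congr_ae (ae_of_all _ fun η => ?_)
    simp only [swap_invol, hinv]
  have e2 : ∫ η, (g η ^ 2 + g (swapConf x η) ^ 2) * f (swapConf x η) * h η ^ 2 ∂ν
      = ∫ η, (g η ^ 2 + g (swapConf x η) ^ 2) * f η * h η ^ 2 ∂ν := by
    conv_rhs => rw [← cov (fun η => (g η ^ 2 + g (swapConf x η) ^ 2) * f η * h η ^ 2)]
    refine integral_congr_ae (ae_of_all _ fun η => ?_)
    simp only [swap_invol, hinv]
    ring
  set I := ∫ η, f η * h η * (g (swapConf x η) - g η) ∂ν with hI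
  have eI : I = (1/2) * ∫ η, (f η - f (swapConf x η)) * h η * (g (swapConf x η) - g η) ∂ν := by
    have esplit : ∫ η, (f η - f (swapConf x η)) * h η * (g (swapConf x η) - g η) ∂ν
        = I - ∫ η, f (swapConf x η) * h η * (g (swapConf x η) - g η) ∂ν := by
      rw [hI, ← integral_sub i1 i1'']
      refine integral_congr_ae (ae_of_all _ fun η => ?_)
      ring
    have eneg : ∫ η, f (swapConf x η) * h η * (g (swapConf x η) - g η) ∂ν
        = - ∫ η, f (swapConf x η) * h η * (g η - g (swapConf x η)) ∂ν := by
      rw [← integral_neg]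
      refine integral_congr_ae (ae_of_all _ fun η => ?_)
      ring
    rw [esplit, eneg, ← e1]
    ring
  -- pointwise key inequality
  have key : ∀ η, (1/2) * ((f η - f (swapConf x η)) * h η * (g (swapConf x η) - g η))
      ≤ β * (Real.sqrt (f (swapConf x η)) - Real.sqrt (f η)) ^ 2
        + (1/(4*β)) * ((f η + f (swapConf x η)) * (g η ^ 2 + g (swapConf x η) ^ 2) * h η ^ 2) := by
    intro η
    have hkey := algebra_key β (Real.sqrt (f η)) (Real.sqrt (f (swapConf x η)))
      (h η) (g η) (g (swapConf x η)) hβ (Real.sqrt_nonneg _) (Real.sqrt_nonneg _)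
    rw [Real.sq_sqrt (hf0 η), Real.sq_sqrt (hf0 (swapConf x η))] at hkey
    exact hkey
  have iL : Integrable (fun η =>
      (1/2) * ((f η - f (swapConf x η)) * h η * (g (swapConf x η) - g η))) ν := by
    have hfe : (fun η => (1/2) * ((f η - f (swapConf x η)) * h η * (g (swapConf x η) - g η)))
        = fun η => (1/2) * (f η * h η * (g (swapConf x η) - g η)
            - f (swapConf x η) * h η * (g (swapConf x η) - g η)) := by
      funext η; ring
    rw [hfe]
    exact ((i1.sub i1'')).const_mul _
  have iR : Integrable (fun η =>
      β * (Real.sqrt (f (swapConf x η)) - Real.sqrt (f η)) ^ 2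
        + (1/(4*β)) * ((f η + f (swapConf x η)) * (g η ^ 2 + g (swapConf x η) ^ 2) * h η ^ 2)) ν :=
    (iA.const_mul β).add (iD.const_mul _)
  have main := integral_mono iL iR key
  rw [integral_add (iA.const_mul β) (iD.const_mul _), integral_const_mul, integral_const_mul,
    integral_const_mul] at main
  have eD : ∫ η, (f η + f (swapConf x η)) * (g η ^ 2 + g (swapConf x η) ^ 2) * h η ^ 2 ∂ν
      = 2 * ∫ η, (g η ^ 2 + g (swapConf x η) ^ 2) * f η * h η ^ 2 ∂ν := by
    have hfe : ∫ η, (f η + f (swapConf x η)) * (g η ^ 2 + g (swapConf x η) ^ 2) * h η ^ 2 ∂ν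
        = ∫ η, ((g η ^ 2 + g (swapConf x η) ^ 2) * f η * h η ^ 2
            + (g η ^ 2 + g (swapConf x η) ^ 2) * f (swapConf x η) * h η ^ 2) ∂ν := by
      refine integral_congr_ae (ae_of_all _ fun η => ?_)
      ring
    rw [hfe, integral_add iC1 iC2, e2]
    ring
  rw [eD, ← eI] at main
  have hC1nonneg : 0 ≤ ∫ η, (g η ^ 2 + g (swapConf x η) ^ 2) * f η * h η ^ 2 ∂ν :=
    integral_nonneg fun η =>
      mul_nonneg (mul_nonneg (by positivity) (hf0 η)) (sq_nonneg _)
  have hfrac : (1/(4*β)) * (2 * ∫ η, (g η ^ 2 + g (swapConf x η) ^ 2) * f η * h η ^ 2 ∂ν)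
      ≤ (1/β) * ∫ η, (g η ^ 2 + g (swapConf x η) ^ 2) * f η * h η ^ 2 ∂ν := by
    rw [show (1/(4*β)) * (2 * ∫ η, (g η ^ 2 + g (swapConf x η) ^ 2) * f η * h η ^ 2 ∂ν)
        = (1/(2*β)) * ∫ η, (g η ^ 2 + g (swapConf x η) ^ 2) * f η * h η ^ 2 ∂ν by ring]
    have hle : (1:ℝ)/(2*β) ≤ 1/β := by
      rw [div_le_div_iff₀ (by linarith) hβ]
      linarith
    exact mul_le_mul_of_nonneg_right hle hC1nonneg
  calc I ≤ _ := main
    _ ≤ _ := add_le_add_right hfrac _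
end

section
/- Let μ and ν be probability measures with μ ≪ ν and relative entropy H(μ|ν). For any measurable event B with ν(B) > 0, μ(B) ≤ (H(μ|ν) + log 2) / log(1 + 1/ν(B)). -/
open MeasureTheory

lemma stmt7_key (a b : ℝ) (ha : 0 ≤ a) :
    a * b ≤ a * Real.log a - a + Real.exp b := by
  rcases eq_or_lt_of_le ha with h | h
  · simp [← h]
    positivity
  · have h1 := Real.add_one_le_exp (b - Real.log a)
    have h2 : a * (b - Real.log a + 1) ≤ a * Real.exp (b - Real.log a) := by
      nlinarith
    have h3 : a * Real.exp (b - Real.log a) = Real.exp b := by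
      rw [Real.exp_sub, Real.exp_log h]
      field_simp
    nlinarith

/-- Entropy inequality for events: `μ(B) ≤ (H(μ|ν) + log 2) / log(1 + 1/ν(B))`. -/
theorem stmt_7 {Ω : Type*} [MeasurableSpace Ω] (μ ν : Measure Ω)
    [IsProbabilityMeasure μ] [IsProbabilityMeasure ν] (hac : μ ≪ ν)
    (Hent : ℝ)
    (hH : Hent = ∫ ω, (μ.rnDeriv ν ω).toReal * Real.log (μ.rnDeriv ν ω).toReal ∂ν)
    (hInt : Integrable (fun ω => (μ.rnDeriv ν ω).toReal * Real.log (μ.rnDeriv ν ω).toReal) ν)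
    (B : Set Ω) (hB : MeasurableSet B) (hBpos : 0 < (ν B).toReal) :
    (μ B).toReal ≤ (Hent + Real.log 2) / Real.log (1 + 1 / (ν B).toReal) := by
  set f : Ω → ℝ := fun ω => (μ.rnDeriv ν ω).toReal with hf
  set q : ℝ := (ν B).toReal with hq
  set t : ℝ := Real.log (1 + 1 / q) with htdef
  have hqne : q ≠ 0 := ne_of_gt hBpos
  have htpos : 0 < t := Real.log_pos (by
    have : 0 < 1 / q := by positivity
    linarith)
  have het : Real.exp t = 1 + 1 / q := Real.exp_log (by positivity)
  have hfint : Integrable f ν := Measure.integrable_toReal_rnDeriv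
  have hfB : Integrable (B.indicator f) ν := hfint.indicator hB
  -- pointwise inequality
  set G : Ω → ℝ := fun ω => B.indicator (fun _ => t) ω - Real.log 2 with hG
  have point : ∀ ω, f ω * G ω ≤ f ω * Real.log (f ω) - f ω + Real.exp (G ω) :=
    fun ω => stmt7_key _ _ ENNReal.toReal_nonneg
  -- rewrite LHS function
  have hLfun : (fun ω => f ω * G ω) = fun ω => t * B.indicator f ω - Real.log 2 * f ω := by
    funext ω
    by_cases h : ω ∈ B <;> simp [hG, h] <;> ring
  have hLint : Integrable (fun ω => f ω * G ω) ν := by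
    rw [hLfun]
    exact ((hfB.const_mul t).sub (hfint.const_mul (Real.log 2)))
  -- rewrite exp ∘ G
  have hEfun : (fun ω => Real.exp (G ω)) =
      fun ω => B.indicator (fun _ => Real.exp t / 2 - 1 / 2) ω + 1 / 2 := by
    funext ω
    by_cases h : ω ∈ B <;>
      simp [hG, h, Real.exp_sub, Real.exp_neg, Real.exp_log (by norm_num : (0:ℝ) < 2)] <;> ring
  have hEint : Integrable (fun ω => Real.exp (G ω)) ν := by
    rw [hEfun]
    exact ((integrable_const _).indicator hB).add (integrable_const _)
  -- compute LHS integral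
  have hμB : ∫ ω, B.indicator f ω ∂ν = (μ B).toReal := by
    rw [integral_indicator hB]
    exact Measure.setIntegral_toReal_rnDeriv hac B
  have hf1 : ∫ ω, f ω ∂ν = 1 := by
    rw [Measure.integral_toReal_rnDeriv hac]
    simp
  have hIL : ∫ ω, f ω * G ω ∂ν = t * (μ B).toReal - Real.log 2 := by
    rw [hLfun, integral_sub (hfB.const_mul t) (hfint.const_mul (Real.log 2)),
      integral_const_mul, integral_const_mul, hμB, hf1]
    ring
  -- compute exp integral
  have hIE : ∫ ω, Real.exp (G ω) ∂ν = 1 := by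
    rw [hEfun, integral_add ((integrable_const _).indicator hB) (integrable_const _),
      integral_indicator_const _ hB, integral_const]
    simp only [smul_eq_mul, measureReal_def, measure_univ, ENNReal.toReal_one, one_mul, ← hq, het]
    field_simp
    ring
  -- integrate the pointwise inequality
  have h3 : Integrable (fun ω => f ω * Real.log (f ω) - f ω) ν := hInt.sub hfint
  have hIR : ∫ ω, (f ω * Real.log (f ω) - f ω + Real.exp (G ω)) ∂ν = Hent := by
    rw [integral_add h3 hEint, integral_sub hInt hfint, hf1, hIE, hH]
    ring
  have hmono : ∫ ω, f ω * G ω ∂ν ≤ ∫ ω, (f ω * Real.log (f ω) - f ω + Real.exp (G ω)) ∂ν :=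
    integral_mono hLint (h3.add hEint) point
  rw [hIL, hIR] at hmono
  rw [le_div_iff₀ htpos]
  nlinarith [hmono]
end
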